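/- Let H(x,ξ) = Σ_j u_j(x_j²+ξ_j²) + V(x) on ℝ^{2n}, where u_1,...,u_n are positive and linearly independent over ℚ, and V is a formal power series in x alone starting at degree 4, invariant under all sign flips x_j ↦ −x_j. Then the Birkhoff normal form polynomials H_1, H_2, H_3, ... (constructed inductively so that a formal canonical transformation brings H to Σ_i H_i(x_1²+ξ_1²,...,x_n²+ξ_n²) modulo higher order) determine the full Taylor series of V at 0. In particular, if two such potentials V and Ṽ yield the same sequence of normal-form polynomials, then V and Ṽ have the same Taylor series at 0. -/

import Mathlib

open MvPolynomial

def LinIndepQ {n : ℕ} (u : Fin n → ℝ) : Prop :=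
  ∀ q : Fin n → ℚ, (∑ j, (q j : ℝ) * u j) = 0 → ∀ j, q j = 0

noncomputable def poisson {n : ℕ} (G F : MvPolynomial (Fin n ⊕ Fin n) ℝ) :
    MvPolynomial (Fin n ⊕ Fin n) ℝ :=
  ∑ j, (pderiv (Sum.inr j) G * pderiv (Sum.inl j) F
        - pderiv (Sum.inl j) G * pderiv (Sum.inr j) F)

noncomputable def Hone {n : ℕ} (u : Fin n → ℝ) : MvPolynomial (Fin n ⊕ Fin n) ℝ :=
  ∑ j, C (u j) * (X (Sum.inl j) ^ 2 + X (Sum.inr j) ^ 2)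

/-- `(ad_G)^k F`. -/
noncomputable def adIter {n : ℕ} (G : MvPolynomial (Fin n ⊕ Fin n) ℝ) :
    ℕ → MvPolynomial (Fin n ⊕ Fin n) ℝ → MvPolynomial (Fin n ⊕ Fin n) ℝ
  | 0, F => F
  | k + 1, F => poisson G (adIter G k F)

/-- The degree-`d` graded component of `exp(ad_G)` applied to the formal series
with homogeneous components `h`, where `G` is homogeneous of degree `2N` (so each
bracket raises degree by `2N - 2`). -/
noncomputable def expAdComp {n : ℕ} (G : MvPolynomial (Fin n ⊕ Fin n) ℝ) (N : ℕ)
    (h : ℕ → MvPolynomial (Fin n ⊕ Fin n) ℝ) (d : ℕ) :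
    MvPolynomial (Fin n ⊕ Fin n) ℝ :=
  ∑ k ∈ Finset.range (d + 1),
    if k * (2 * N - 2) ≤ d then
      ((k.factorial : ℝ)⁻¹) • adIter G k (h (d - k * (2 * N - 2)))
    else 0

/-- Substitution of `x_j² + ξ_j²` into a polynomial of `n` variables. -/
noncomputable def subSq {n : ℕ} (h : MvPolynomial (Fin n) ℝ) :
    MvPolynomial (Fin n ⊕ Fin n) ℝ :=
  aeval (fun j => X (Sum.inl j) ^ 2 + X (Sum.inr j) ^ 2) h

/-- The complexification `x_j = (z_j + z̄_j)/2`, `ξ_j = (z_j - z̄_j)/(2i)`. -/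
noncomputable def toComplexZ {n : ℕ} :
    MvPolynomial (Fin n ⊕ Fin n) ℝ →ₐ[ℝ] MvPolynomial (Fin n ⊕ Fin n) ℂ :=
  aeval (Sum.elim
    (fun j => MvPolynomial.C ((1 : ℂ) / 2) * (X (Sum.inl j) + X (Sum.inr j)))
    (fun j => MvPolynomial.C (-Complex.I / 2) * (X (Sum.inl j) - X (Sum.inr j))))

def IsDiagExp {n : ℕ} (d : (Fin n ⊕ Fin n) →₀ ℕ) : Prop :=
  ∀ j, d (Sum.inl j) = d (Sum.inr j)

/-- `BirkhoffNormalizes u Vc K`: the formal Hamiltonian `H₁ + V` (with `V` given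
by its homogeneous components `Vc`) is brought to the normal form with diagonal
terms `K i = H_i(x₁²+ξ₁²,…,x_n²+ξ_n²)` by the inductive Birkhoff scheme: at step
`N` one conjugates by `exp(ad_{G_N})` with `G_N` homogeneous of degree `2N`
spanned by off-diagonal monomials, and after step `N` all graded components of
degree `≤ 2N` are in normal form. -/
def BirkhoffNormalizes {n : ℕ} (u : Fin n → ℝ)
    (Vc : ℕ → MvPolynomial (Fin n ⊕ Fin n) ℝ)
    (K : ℕ → MvPolynomial (Fin n ⊕ Fin n) ℝ) : Prop :=
  ∃ G : ℕ → MvPolynomial (Fin n ⊕ Fin n) ℝ,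
  ∃ T : ℕ → ℕ → MvPolynomial (Fin n ⊕ Fin n) ℝ,
    (∀ d, T 1 d = if d = 2 then Hone u + Vc 2 else Vc d) ∧
    (∀ N, 2 ≤ N →
      (G N).IsHomogeneous (2 * N) ∧
      (∀ d ∈ (toComplexZ (G N)).support, ¬ IsDiagExp d) ∧
      (∀ d, T N d = expAdComp (G N) N (T (N - 1)) d) ∧
      (∀ i, 2 ≤ i → i ≤ N → T N (2 * i) = K i)) ∧
    (∀ i, 2 ≤ i → ∃ h : MvPolynomial (Fin n) ℝ, h.IsHomogeneous i ∧ K i = subSq h)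


section Aux

variable {n : ℕ}

section Chain

variable {σ τ : Type*} [Fintype σ] [DecidableEq σ]

lemma pderiv_aeval_chain (f : σ → MvPolynomial τ ℂ) (i : τ) (p : MvPolynomial σ ℝ) :
    pderiv i (aeval f p) = ∑ v : σ, aeval f (pderiv v p) * pderiv i (f v) := by
  induction p using MvPolynomial.induction_on with
  | C a => simp [algebraMap_eq]
  | add p q hp hq => simp [map_add, hp, hq, Finset.sum_add_distrib, add_mul]
  | mul_X p w hp =>
    simp only [map_mul, aeval_X, pderiv_mul, hp, Finset.sum_mul, Finset.mul_sum]
    have : ∀ v : σ, (aeval f) ((pderiv v) p * X w + p * (pderiv v) (X w)) * (pderiv i) (f v)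
        = (aeval f) ((pderiv v) p) * (pderiv i) (f v) * f w
          + (if v = w then (aeval f) p * (pderiv i) (f w) else 0) := by
      intro v
      by_cases hv : v = w
      · subst hv; simp [pderiv_X]; ring
      · simp [pderiv_X, hv, Ne.symm hv]; ring
    rw [Finset.sum_congr rfl fun v _ => this v, Finset.sum_add_distrib,
      Finset.sum_ite_eq' Finset.univ w]
    simp

end Chain

lemma pd_phi (k : Fin n) (p : MvPolynomial (Fin n ⊕ Fin n) ℝ) :
    pderiv (Sum.inl k) (toComplexZ p)
      = C ((1:ℂ)/2) * toComplexZ (pderiv (Sum.inl k) p)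
        + C (-Complex.I/2) * toComplexZ (pderiv (Sum.inr k) p)
    ∧ pderiv (Sum.inr k) (toComplexZ p)
      = C ((1:ℂ)/2) * toComplexZ (pderiv (Sum.inl k) p)
        + C (Complex.I/2) * toComplexZ (pderiv (Sum.inr k) p) := by
  set F := (Sum.elim
      (fun j => MvPolynomial.C ((1 : ℂ) / 2) * (X (Sum.inl j) + X (Sum.inr j)))
      (fun j => MvPolynomial.C (-Complex.I / 2) * (X (Sum.inl j) - X (Sum.inr j)))
      : Fin n ⊕ Fin n → MvPolynomial (Fin n ⊕ Fin n) ℂ) with hF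
  have hphi : ∀ q, (toComplexZ q : MvPolynomial (Fin n ⊕ Fin n) ℂ) = aeval F q := fun q => rfl
  have d1 : ∀ j : Fin n, j ≠ k → ∀ i : Fin n ⊕ Fin n,
      (i = Sum.inl k ∨ i = Sum.inr k) → pderiv i (F (Sum.inl j)) = 0 ∧
        pderiv i (F (Sum.inr j)) = 0 := by
    intro j hj i hi
    have h1 : (Sum.inl j : Fin n ⊕ Fin n) ≠ i := by rcases hi with rfl | rfl <;> simp [hj]
    have h2 : (Sum.inr j : Fin n ⊕ Fin n) ≠ i := by rcases hi with rfl | rfl <;> simp [hj]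
    constructor <;> simp [hF, pderiv_C_mul, pderiv_X_of_ne h1, pderiv_X_of_ne h2]
  have e1 : pderiv (Sum.inl k) (F (Sum.inl k)) = C ((1:ℂ)/2) := by
    have h2 : (Sum.inr k : Fin n ⊕ Fin n) ≠ Sum.inl k := by simp
    simp [hF, pderiv_C_mul, pderiv_X_of_ne h2]
  have e2 : pderiv (Sum.inl k) (F (Sum.inr k)) = C (-Complex.I/2) := by
    have h2 : (Sum.inr k : Fin n ⊕ Fin n) ≠ Sum.inl k := by simp
    simp [hF, pderiv_C_mul, pderiv_X_of_ne h2]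
  have e3 : pderiv (Sum.inr k) (F (Sum.inl k)) = C ((1:ℂ)/2) := by
    have h2 : (Sum.inl k : Fin n ⊕ Fin n) ≠ Sum.inr k := by simp
    simp [hF, pderiv_C_mul, pderiv_X_of_ne h2]
  have e4 : pderiv (Sum.inr k) (F (Sum.inr k)) = C (Complex.I/2) := by
    have h2 : (Sum.inl k : Fin n ⊕ Fin n) ≠ Sum.inr k := by simp
    rw [hF]
    simp only [Sum.elim_inr, pderiv_C_mul, map_sub, pderiv_X_self, pderiv_X_of_ne h2]
    rw [zero_sub, mul_neg, mul_one, ← map_neg]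
    congr 1
    ring
  constructor
  · rw [hphi, pderiv_aeval_chain F (Sum.inl k) p, Fintype.sum_sum_type,
      Finset.sum_eq_single k (fun j _ hj => by rw [(d1 j hj _ (Or.inl rfl)).1, mul_zero]) (by simp),
      Finset.sum_eq_single k (fun j _ hj => by rw [(d1 j hj _ (Or.inl rfl)).2, mul_zero]) (by simp),
      e1, e2, ← hphi, ← hphi]
    ring
  · rw [hphi, pderiv_aeval_chain F (Sum.inr k) p, Fintype.sum_sum_type,
      Finset.sum_eq_single k (fun j _ hj => by rw [(d1 j hj _ (Or.inr rfl)).1, mul_zero]) (by simp),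
      Finset.sum_eq_single k (fun j _ hj => by rw [(d1 j hj _ (Or.inr rfl)).2, mul_zero]) (by simp),
      e3, e4, ← hphi, ← hphi]
    ring

lemma pderiv_hone_inl (u : Fin n → ℝ) (j : Fin n) :
    pderiv (Sum.inl j) (Hone u) = C (2 * u j) * X (Sum.inl j) := by
  unfold Hone
  rw [map_sum, Finset.sum_eq_single j]
  · have h2 : (Sum.inr j : Fin n ⊕ Fin n) ≠ Sum.inl j := by simp
    rw [C_mul, map_ofNat]
    simp [pderiv_C_mul, pderiv_pow, pderiv_X_of_ne h2]
    ring
  · intro i _ hi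
    have h1 : (Sum.inl i : Fin n ⊕ Fin n) ≠ Sum.inl j := by simp [hi]
    have h2 : (Sum.inr i : Fin n ⊕ Fin n) ≠ Sum.inl j := by simp
    simp [pderiv_C_mul, pderiv_pow, pderiv_X_of_ne h1, pderiv_X_of_ne h2]
  · simp

lemma pderiv_hone_inr (u : Fin n → ℝ) (j : Fin n) :
    pderiv (Sum.inr j) (Hone u) = C (2 * u j) * X (Sum.inr j) := by
  unfold Hone
  rw [map_sum, Finset.sum_eq_single j]
  · have h2 : (Sum.inl j : Fin n ⊕ Fin n) ≠ Sum.inr j := by simp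
    rw [C_mul, map_ofNat]
    simp [pderiv_C_mul, pderiv_pow, pderiv_X_of_ne h2]
    ring
  · intro i _ hi
    have h1 : (Sum.inr i : Fin n ⊕ Fin n) ≠ Sum.inr j := by simp [hi]
    have h2 : (Sum.inl i : Fin n ⊕ Fin n) ≠ Sum.inr j := by simp
    simp [pderiv_C_mul, pderiv_pow, pderiv_X_of_ne h1, pderiv_X_of_ne h2]
  · simp

lemma phi_poisson_hone (u : Fin n → ℝ) (Q : MvPolynomial (Fin n ⊕ Fin n) ℝ) :
    toComplexZ (poisson Q (Hone u))
      = ∑ j, C (2 * (u j : ℂ) * Complex.I) *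
          (X (Sum.inl j) * pderiv (Sum.inl j) (toComplexZ Q)
            - X (Sum.inr j) * pderiv (Sum.inr j) (toComplexZ Q)) := by
  unfold poisson
  rw [map_sum]
  refine Finset.sum_congr rfl fun j _ => ?_
  rw [pderiv_hone_inl, pderiv_hone_inr]
  have hCa : ∀ a : ℝ, (toComplexZ (C a) : MvPolynomial (Fin n ⊕ Fin n) ℂ) = C (a : ℂ) := by
    intro a
    show aeval _ (C a) = _
    rw [aeval_C]
    rfl
  have hC2 : (toComplexZ (C (2:ℝ)) : MvPolynomial (Fin n ⊕ Fin n) ℂ) = C (2 : ℂ) := by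
    rw [hCa]
    norm_num
  have hXl : (toComplexZ (X (Sum.inl j)) : MvPolynomial (Fin n ⊕ Fin n) ℂ)
      = C ((1:ℂ)/2) * (X (Sum.inl j) + X (Sum.inr j)) := by
    show aeval _ (X (Sum.inl j)) = _
    rw [aeval_X]
    rfl
  have hXr : (toComplexZ (X (Sum.inr j)) : MvPolynomial (Fin n ⊕ Fin n) ℂ)
      = C (-Complex.I/2) * (X (Sum.inl j) - X (Sum.inr j)) := by
    show aeval _ (X (Sum.inr j)) = _
    rw [aeval_X]
    rfl
  simp only [map_sub, map_mul, hCa, hC2, hXl, hXr, (pd_phi j Q).1, (pd_phi j Q).2]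
  set A := toComplexZ (pderiv (Sum.inl j) Q)
  set B := toComplexZ (pderiv (Sum.inr j) Q)
  set Y := (X (Sum.inl j) : MvPolynomial (Fin n ⊕ Fin n) ℂ)
  set Z := (X (Sum.inr j) : MvPolynomial (Fin n ⊕ Fin n) ℂ)
  have expand : ∀ c : ℂ, (C c : MvPolynomial (Fin n ⊕ Fin n) ℂ) = c • (1 : MvPolynomial (Fin n ⊕ Fin n) ℂ) := by
    intro c
    rw [smul_eq_C_mul, mul_one]
  simp only [expand, smul_mul_assoc, mul_smul_comm, one_mul, mul_add, mul_sub, add_mul,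
    sub_mul, smul_add, smul_sub, smul_smul]
  simp only [mul_comm B Y, mul_comm B Z, mul_comm A Y, mul_comm A Z]
  match_scalars <;> ring_nf <;> simp [Complex.I_sq]

lemma coeff_X_mul_pderiv {σ : Type*} [DecidableEq σ] (v : σ) (R : MvPolynomial σ ℂ)
    (e : σ →₀ ℕ) : coeff e (X v * pderiv v R) = (e v : ℂ) * coeff e R := by
  induction R using MvPolynomial.induction_on' with
  | add p q hp hq => simp [coeff_add, hp, hq, mul_add]
  | monomial d a =>
    rw [pderiv_monomial, X, monomial_mul, one_mul]
    by_cases hd : d v = 0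
    · rw [hd]
      norm_num
      by_cases he : d = e
      · subst he
        simp [hd]
      · simp [he]
    · have hds : Finsupp.single v 1 + (d - Finsupp.single v 1) = d := by
        ext w
        by_cases hw : w = v
        · subst hw
          simp only [Finsupp.add_apply, Finsupp.tsub_apply, Finsupp.single_eq_same]
          omega
        · simp [Finsupp.single_apply, Ne.symm hw, Finsupp.tsub_apply]
      rw [hds, coeff_monomial, coeff_monomial]
      by_cases he : d = e
      · subst he
        rw [if_pos rfl, if_pos rfl]
        push_cast
        ring
      · simp [he]

/-- The eigenvalue of `ad_{H₁}` on the monomial `z^α z̄^β`. -/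
noncomputable def lam (u : Fin n → ℝ) (e : (Fin n ⊕ Fin n) →₀ ℕ) : ℂ :=
  2 * Complex.I * ∑ j, (u j : ℂ) * ((e (Sum.inl j) : ℂ) - (e (Sum.inr j) : ℂ))

lemma coeff_phi_poisson_hone (u : Fin n → ℝ) (Q : MvPolynomial (Fin n ⊕ Fin n) ℝ)
    (e : (Fin n ⊕ Fin n) →₀ ℕ) :
    coeff e (toComplexZ (poisson Q (Hone u))) = lam u e * coeff e (toComplexZ Q) := by
  rw [phi_poisson_hone, coeff_sum]
  unfold lam
  trans ∑ j, (2 * Complex.I * ((u j : ℂ) * ((e (Sum.inl j) : ℂ) - (e (Sum.inr j) : ℂ))))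
      * coeff e (toComplexZ Q)
  · refine Finset.sum_congr rfl fun j _ => ?_
    rw [coeff_C_mul, coeff_sub, coeff_X_mul_pderiv, coeff_X_mul_pderiv]
    ring
  · rw [← Finset.sum_mul, ← Finset.mul_sum]

lemma lam_diag_eq_zero (u : Fin n → ℝ) (e : (Fin n ⊕ Fin n) →₀ ℕ) (h : IsDiagExp e) :
    lam u e = 0 := by
  unfold lam
  rw [Finset.sum_eq_zero fun j _ => by rw [h j, sub_self, mul_zero]]
  ring

lemma lam_ne_zero (u : Fin n → ℝ) (hind : LinIndepQ u) (e : (Fin n ⊕ Fin n) →₀ ℕ)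
    (h : ¬ IsDiagExp e) : lam u e ≠ 0 := by
  unfold lam
  intro hc
  apply h
  intro j
  have h2 : (2 * Complex.I : ℂ) ≠ 0 := by simp [Complex.I_ne_zero]
  have hsum : (∑ j, (u j : ℂ) * ((e (Sum.inl j) : ℂ) - (e (Sum.inr j) : ℂ))) = 0 := by
    rcases mul_eq_zero.mp hc with h' | h'
    · exact absurd h' h2
    · exact h'
  set q : Fin n → ℚ := fun j => (e (Sum.inl j) : ℚ) - (e (Sum.inr j) : ℚ) with hq
  have hre : (∑ j, (q j : ℝ) * u j) = 0 := by
    have h5 := congrArg Complex.re hsum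
    rw [Complex.re_sum, Complex.zero_re] at h5
    rw [← h5]
    refine Finset.sum_congr rfl fun i _ => ?_
    have h6 : ((u i : ℂ) * ((e (Sum.inl i) : ℂ) - (e (Sum.inr i) : ℂ))).re
        = u i * ((e (Sum.inl i) : ℝ) - (e (Sum.inr i) : ℝ)) := by
      norm_cast
    rw [h6, hq]
    push_cast
    ring
  have h4 : ((e (Sum.inl j) : ℚ)) - (e (Sum.inr j) : ℚ) = 0 := hind q hre j
  have h7 : ((e (Sum.inl j) : ℚ)) = (e (Sum.inr j) : ℚ) := by linarith
  exact_mod_cast h7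

lemma toComplexZ_injective : Function.Injective (toComplexZ (n := n)) := by
  set g : Fin n ⊕ Fin n → MvPolynomial (Fin n ⊕ Fin n) ℂ :=
    Sum.elim (fun j => X (Sum.inl j) + C Complex.I * X (Sum.inr j))
      (fun j => X (Sum.inl j) - C Complex.I * X (Sum.inr j)) with hg
  have hX : ∀ v, aeval g (toComplexZ (X v) : MvPolynomial (Fin n ⊕ Fin n) ℂ) = X v := by
    rintro (j | j)
    · have h0 : (toComplexZ (X (Sum.inl j)) : MvPolynomial (Fin n ⊕ Fin n) ℂ)
          = C ((1:ℂ)/2) * (X (Sum.inl j) + X (Sum.inr j)) := by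
        show aeval _ (X (Sum.inl j)) = _
        rw [aeval_X]
        rfl
      rw [h0, map_mul, map_add, aeval_X, aeval_X, aeval_C, hg]
      simp only [Sum.elim_inl, Sum.elim_inr, algebraMap_eq]
      have expand : ∀ c : ℂ, (C c : MvPolynomial (Fin n ⊕ Fin n) ℂ)
          = c • (1 : MvPolynomial (Fin n ⊕ Fin n) ℂ) := fun c => by
        rw [smul_eq_C_mul, mul_one]
      simp only [expand, smul_mul_assoc, mul_smul_comm, one_mul, mul_add, mul_sub, add_mul,
        sub_mul, smul_add, smul_sub, smul_smul]
      match_scalars <;> ring_nf <;> simp [Complex.I_sq]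
    · have h0 : (toComplexZ (X (Sum.inr j)) : MvPolynomial (Fin n ⊕ Fin n) ℂ)
          = C (-Complex.I/2) * (X (Sum.inl j) - X (Sum.inr j)) := by
        show aeval _ (X (Sum.inr j)) = _
        rw [aeval_X]
        rfl
      rw [h0, map_mul, map_sub, aeval_X, aeval_X, aeval_C, hg]
      simp only [Sum.elim_inl, Sum.elim_inr, algebraMap_eq]
      have expand : ∀ c : ℂ, (C c : MvPolynomial (Fin n ⊕ Fin n) ℂ)
          = c • (1 : MvPolynomial (Fin n ⊕ Fin n) ℂ) := fun c => by
        rw [smul_eq_C_mul, mul_one]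
      simp only [expand, smul_mul_assoc, mul_smul_comm, one_mul, mul_add, mul_sub, add_mul,
        sub_mul, smul_add, smul_sub, smul_smul]
      match_scalars <;> ring_nf <;> simp [Complex.I_sq]
  have key : ∀ p : MvPolynomial (Fin n ⊕ Fin n) ℝ,
      aeval g (toComplexZ p : MvPolynomial (Fin n ⊕ Fin n) ℂ) = map (algebraMap ℝ ℂ) p := by
    intro p
    induction p using MvPolynomial.induction_on with
    | C a =>
      have : (toComplexZ (C a) : MvPolynomial (Fin n ⊕ Fin n) ℂ) = C ((algebraMap ℝ ℂ) a) := by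
        show aeval _ (C a) = _
        rw [aeval_C]
        rfl
      rw [this, aeval_C, map_C]
      rfl
    | add p q hp hq => rw [map_add, map_add, hp, hq, map_add]
    | mul_X p v hp => rw [map_mul, map_mul, hp, hX, map_mul, map_X]
  intro p q hpq
  have := congrArg (aeval g) hpq
  rw [key, key] at this
  exact MvPolynomial.map_injective (algebraMap ℝ ℂ) Complex.ofReal_injective this

lemma prod_monomial_eq {σ : Type*} {s : Finset (Fin n)} (d : Fin n → (σ →₀ ℕ)) (c : Fin n → ℂ) :
    (∏ j ∈ s, (monomial (d j) (c j) : MvPolynomial σ ℂ))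
      = monomial (∑ j ∈ s, d j) (∏ j ∈ s, c j) := by
  induction s using Finset.cons_induction with
  | empty => simp [monomial_zero', C_1]
  | cons a s ha ih =>
    rw [Finset.prod_cons, ih, monomial_mul, Finset.sum_cons, Finset.prod_cons]

lemma add_pow_expand (a b : Fin n ⊕ Fin n) (hab : a ≠ b) (k : ℕ) :
    ((X a + X b : MvPolynomial (Fin n ⊕ Fin n) ℂ)) ^ k
      = ∑ i ∈ Finset.range (k + 1),
          monomial (Finsupp.single a i + Finsupp.single b (k - i)) ((k.choose i : ℂ)) := by
  rw [add_pow]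
  refine Finset.sum_congr rfl fun i _ => ?_
  rw [X_pow_eq_monomial, X_pow_eq_monomial, monomial_mul, one_mul]
  have : ((k.choose i : ℕ) : MvPolynomial (Fin n ⊕ Fin n) ℂ) = C ((k.choose i : ℂ)) := by
    push_cast
    rfl
  rw [this, mul_comm, C_mul_monomial, mul_one]

/-- Coefficient formula for `∏ j (z_j + z̄_j)^(k j)`. -/
lemma coeff_prod_add_pow (k : Fin n → ℕ) (d : (Fin n ⊕ Fin n) →₀ ℕ) :
    coeff d (∏ j, ((X (Sum.inl j) + X (Sum.inr j)) ^ (k j) : MvPolynomial (Fin n ⊕ Fin n) ℂ))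
      = if ∀ j, d (Sum.inl j) + d (Sum.inr j) = k j
        then ∏ j, ((k j).choose (d (Sum.inl j)) : ℂ) else 0 := by
  have hab : ∀ j : Fin n, (Sum.inl j : Fin n ⊕ Fin n) ≠ Sum.inr j := fun j => by simp
  simp_rw [add_pow_expand _ _ (hab _)]
  rw [Finset.prod_univ_sum]
  simp_rw [prod_monomial_eq]
  rw [coeff_sum]
  have Eapp : ∀ g : Fin n → ℕ, ∀ j0 : Fin n,
      (∑ j, (Finsupp.single (Sum.inl j : Fin n ⊕ Fin n) (g j)
        + Finsupp.single (Sum.inr j : Fin n ⊕ Fin n) (k j - g j))) (Sum.inl j0) = g j0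
      ∧ (∑ j, (Finsupp.single (Sum.inl j : Fin n ⊕ Fin n) (g j)
        + Finsupp.single (Sum.inr j : Fin n ⊕ Fin n) (k j - g j))) (Sum.inr j0)
          = k j0 - g j0 := by
    intro g j0
    rw [Finsupp.finset_sum_apply, Finsupp.finset_sum_apply]
    constructor
    · rw [Finset.sum_eq_single j0]
      · simp
      · intro i _ hi
        simp [Finsupp.single_apply, hi]
      · simp
    · rw [Finset.sum_eq_single j0]
      · simp
      · intro i _ hi
        simp [Finsupp.single_apply, hi]
      · simp
  by_cases hcompat : ∀ j, d (Sum.inl j) + d (Sum.inr j) = k j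
  · rw [if_pos hcompat]
    set g0 : Fin n → ℕ := fun j => d (Sum.inl j) with hg0
    have hmem : g0 ∈ Fintype.piFinset (fun j => Finset.range (k j + 1)) := by
      rw [Fintype.mem_piFinset]
      intro j
      rw [Finset.mem_range]
      have := hcompat j
      have hg' : g0 j = d (Sum.inl j) := rfl
      omega
    rw [Finset.sum_eq_single_of_mem g0 hmem]
    · have hE : (∑ j, (Finsupp.single (Sum.inl j : Fin n ⊕ Fin n) (g0 j)
          + Finsupp.single (Sum.inr j : Fin n ⊕ Fin n) (k j - g0 j))) = d := by
        ext v
        rcases v with j | j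
        · rw [(Eapp g0 j).1]
        · rw [(Eapp g0 j).2]
          have := hcompat j
          have hg' : g0 j = d (Sum.inl j) := rfl
          omega
      rw [coeff_monomial, if_pos hE]
    · intro g hg hne
      rw [coeff_monomial, if_neg]
      intro hE
      apply hne
      funext j
      have := (Eapp g j).1
      rw [hE] at this
      exact this.symm
  · rw [if_neg hcompat]
    refine Finset.sum_eq_zero fun g hg => ?_
    rw [coeff_monomial, if_neg]
    intro hE
    apply hcompat
    intro j
    have h1 := (Eapp g j).1
    have h2 := (Eapp g j).2
    rw [hE] at h1 h2
    have hgk : g j ≤ k j := by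
      rw [Fintype.mem_piFinset] at hg
      have := hg j
      rw [Finset.mem_range] at this
      omega
    omega

lemma coeff_phi_monomial (a : ℝ) (e d : (Fin n ⊕ Fin n) →₀ ℕ)
    (he : ∀ j, e (Sum.inr j) = 0) :
    coeff d (toComplexZ (monomial e a))
      = if ∀ j, d (Sum.inl j) + d (Sum.inr j) = e (Sum.inl j)
        then (a : ℂ) * ((1:ℂ)/2)^(∑ j, e (Sum.inl j))
          * ∏ j, ((e (Sum.inl j)).choose (d (Sum.inl j)) : ℂ)
        else 0 := by
  have hphi : toComplexZ (monomial e a)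
      = C ((a : ℂ) * ((1:ℂ)/2)^(∑ j, e (Sum.inl j)))
        * ∏ j, ((X (Sum.inl j) + X (Sum.inr j)) ^ (e (Sum.inl j))
            : MvPolynomial (Fin n ⊕ Fin n) ℂ) := by
    show aeval _ (monomial e a) = _
    rw [aeval_monomial]
    rw [Finsupp.prod_fintype _ _ (fun v => pow_zero _)]
    rw [Fintype.prod_sum_type]
    have h2 : ∀ j : Fin n, (Sum.elim
        (fun j => MvPolynomial.C ((1 : ℂ) / 2) * (X (Sum.inl j) + X (Sum.inr j)))
        (fun j => MvPolynomial.C (-Complex.I / 2) * (X (Sum.inl j) - X (Sum.inr j)))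
        (Sum.inr j) : MvPolynomial (Fin n ⊕ Fin n) ℂ) ^ e (Sum.inr j) = 1 := by
      intro j
      rw [he j, pow_zero]
    rw [Finset.prod_congr rfl fun j _ => h2 j, Finset.prod_const_one, mul_one]
    have h3 : ∀ j : Fin n, (Sum.elim
        (fun j => MvPolynomial.C ((1 : ℂ) / 2) * (X (Sum.inl j) + X (Sum.inr j)))
        (fun j => MvPolynomial.C (-Complex.I / 2) * (X (Sum.inl j) - X (Sum.inr j)))
        (Sum.inl j) : MvPolynomial (Fin n ⊕ Fin n) ℂ) ^ e (Sum.inl j)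
        = C (((1:ℂ)/2) ^ e (Sum.inl j)) * (X (Sum.inl j) + X (Sum.inr j)) ^ e (Sum.inl j) := by
      intro j
      rw [Sum.elim_inl, mul_pow, ← C_pow]
    rw [Finset.prod_congr rfl fun j _ => h3 j, Finset.prod_mul_distrib, ← map_prod,
      Finset.prod_pow_eq_pow_sum]
    have halg : (algebraMap ℝ (MvPolynomial (Fin n ⊕ Fin n) ℂ)) a = C ((a : ℂ)) := rfl
    rw [halg, ← mul_assoc, ← C_mul]
  rw [hphi, coeff_C_mul, coeff_prod_add_pow]
  split_ifs
  · ring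
  · ring

lemma diag_coeff_injective (P : MvPolynomial (Fin n ⊕ Fin n) ℝ)
    (hxP : ∀ e ∈ P.support, ∀ j, e (Sum.inr j) = 0)
    (hevenP : ∀ e ∈ P.support, ∀ j, Even (e (Sum.inl j)))
    (hdiag : ∀ e, IsDiagExp e → coeff e (toComplexZ P) = 0) : P = 0 := by
  by_contra hP
  obtain ⟨e0, he0⟩ := Finset.nonempty_of_ne_empty (fun h => hP (support_eq_empty.mp h))
  set m : Fin n → ℕ := fun j => e0 (Sum.inl j) / 2 with hm
  have hm2 : ∀ j, 2 * m j = e0 (Sum.inl j) := by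
    intro j
    obtain ⟨r, hr⟩ := hevenP e0 he0 j
    have : e0 (Sum.inl j) / 2 = r := by omega
    simp only [hm, this]
    omega
  set dm : (Fin n ⊕ Fin n) →₀ ℕ := Finsupp.equivFunOnFinite.symm (Sum.elim m m) with hdm
  have hdmv : ∀ v, dm v = Sum.elim m m v := fun v => rfl
  have hdiagm : IsDiagExp dm := by
    intro j
    rw [hdmv, hdmv]
    rfl
  have hkey := hdiag dm hdiagm
  rw [as_sum P, map_sum, coeff_sum] at hkey
  have hterm : ∀ e ∈ P.support,
      coeff dm (toComplexZ (monomial e (coeff e P)))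
        = if e = e0 then ((coeff e0 P : ℝ) : ℂ) * ((1:ℂ)/2)^(∑ j, e0 (Sum.inl j))
            * ∏ j, ((e0 (Sum.inl j)).choose (m j) : ℂ) else 0 := by
    intro e hel
    rw [coeff_phi_monomial _ _ _ (hxP e hel)]
    have hc : (∀ j, dm (Sum.inl j) + dm (Sum.inr j) = e (Sum.inl j)) ↔ e = e0 := by
      constructor
      · intro hcomp
        ext v
        rcases v with j | j
        · rw [← hcomp j, hdmv, hdmv, Sum.elim_inl, Sum.elim_inr, ← hm2 j]
          omega
        · rw [hxP e hel j]
          exact (hxP e0 he0 j).symm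
      · rintro rfl j
        rw [hdmv, hdmv, Sum.elim_inl, Sum.elim_inr, ← hm2 j]
        omega
    by_cases hee : e = e0
    · rw [if_pos ((hc.mpr hee)), if_pos hee, hee]
      have : ∀ j, dm (Sum.inl j) = m j := fun j => rfl
      simp_rw [this]
    · rw [if_neg (fun hcomp => hee (hc.mp hcomp)), if_neg hee]
  rw [Finset.sum_congr rfl hterm, Finset.sum_ite_eq' P.support e0] at hkey
  rw [if_pos he0] at hkey
  have hcoeff : ((coeff e0 P : ℝ) : ℂ) ≠ 0 := by
    rw [mem_support_iff] at he0
    exact_mod_cast he0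
  have hpow : (((1:ℂ)/2))^(∑ j, e0 (Sum.inl j)) ≠ 0 := by
    apply pow_ne_zero
    norm_num
  have hprod : (∏ j, ((e0 (Sum.inl j)).choose (m j) : ℂ)) ≠ 0 := by
    apply Finset.prod_ne_zero_iff.mpr
    intro j _
    have : 0 < (e0 (Sum.inl j)).choose (m j) := by
      apply Nat.choose_pos
      have := hm2 j
      omega
    exact_mod_cast this.ne'
  exact (mul_ne_zero (mul_ne_zero hcoeff hpow) hprod) hkey

lemma poisson_zero_right (G : MvPolynomial (Fin n ⊕ Fin n) ℝ) : poisson G 0 = 0 := by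
  unfold poisson
  simp

lemma adIter_zero_eq (G : MvPolynomial (Fin n ⊕ Fin n) ℝ) (k : ℕ) : adIter G k 0 = 0 := by
  induction k with
  | zero => rfl
  | succ k ih => show poisson G (adIter G k 0) = 0; rw [ih, poisson_zero_right]

lemma poisson_sub_left (A B F : MvPolynomial (Fin n ⊕ Fin n) ℝ) :
    poisson (A - B) F = poisson A F - poisson B F := by
  unfold poisson
  rw [← Finset.sum_sub_distrib]
  exact Finset.sum_congr rfl fun j _ => by rw [map_sub, map_sub]; ring

lemma expAdComp_zero (G : MvPolynomial (Fin n ⊕ Fin n) ℝ) (N : ℕ)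
    (h : ℕ → MvPolynomial (Fin n ⊕ Fin n) ℝ) : expAdComp G N h 0 = h 0 := by
  unfold expAdComp
  rw [Finset.sum_range_one]
  simp [adIter]

lemma expAdComp_two (G : MvPolynomial (Fin n ⊕ Fin n) ℝ) (N : ℕ) (hN : 2 ≤ N)
    (h : ℕ → MvPolynomial (Fin n ⊕ Fin n) ℝ) (h0 : h 0 = 0) :
    expAdComp G N h 2 = h 2 := by
  unfold expAdComp
  rw [show (2:ℕ) + 1 = 3 from rfl, Finset.sum_range_succ, Finset.sum_range_succ,
    Finset.sum_range_one]
  have c2 : ¬ (2 * (2 * N - 2) ≤ 2) := by omega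
  rw [if_neg c2]
  have c1 : ∀ P : Prop, (1 * (2 * N - 2) ≤ 2) → N = 2 := fun _ hc => by omega
  by_cases hc : 1 * (2 * N - 2) ≤ 2
  · have hN2 : N = 2 := c1 True hc
    subst hN2
    rw [if_pos hc]
    norm_num
    rw [h0, adIter_zero_eq]
    show h 2 + 0 = h 2
    rw [add_zero]
  · rw [if_neg hc]
    simp [adIter]

lemma expAdComp_split (G : MvPolynomial (Fin n ⊕ Fin n) ℝ) (N : ℕ)
    (h : ℕ → MvPolynomial (Fin n ⊕ Fin n) ℝ) (d : ℕ) :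
    expAdComp G N h d = h d + ∑ i ∈ Finset.range d,
      (if (i+1) * (2 * N - 2) ≤ d then
        (((i+1).factorial : ℝ)⁻¹) • adIter G (i+1) (h (d - (i+1) * (2 * N - 2)))
      else 0) := by
  unfold expAdComp
  rw [Finset.sum_range_succ']
  rw [add_comm]
  congr 1
  simp [adIter]

lemma expAdComp_top (G : MvPolynomial (Fin n ⊕ Fin n) ℝ) (N : ℕ) (hN : 2 ≤ N)
    (h : ℕ → MvPolynomial (Fin n ⊕ Fin n) ℝ) (h0 : h 0 = 0) :
    expAdComp G N h (2*N) = h (2*N) + poisson G (h 2) := by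
  rw [expAdComp_split]
  congr 1
  rw [Finset.sum_eq_single_of_mem 0 (Finset.mem_range.mpr (by omega))]
  · have c1 : 1 * (2 * N - 2) ≤ 2 * N := by omega
    rw [if_pos c1]
    have : 2 * N - 1 * (2 * N - 2) = 2 := by omega
    rw [this]
    show (((1).factorial : ℝ)⁻¹) • poisson G (adIter G 0 (h 2)) = _
    norm_num [adIter]
  · intro i _ hi
    by_cases hc : (i+1) * (2 * N - 2) ≤ 2 * N
    · have h2le : 2 * (2 * N - 2) ≤ (i+1) * (2 * N - 2) := Nat.mul_le_mul_right _ (by omega)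
      have hN2 : N = 2 := by omega
      subst hN2
      have hi1 : i = 1 := by omega
      subst hi1
      rw [if_pos hc]
      norm_num
      rw [h0, adIter_zero_eq]
    · rw [if_neg hc]

section Scheme

variable {u : Fin n → ℝ} {Vc : ℕ → MvPolynomial (Fin n ⊕ Fin n) ℝ}
  {G : ℕ → MvPolynomial (Fin n ⊕ Fin n) ℝ} {T : ℕ → ℕ → MvPolynomial (Fin n ⊕ Fin n) ℝ}

lemma T_zero_eq (hV0 : Vc 0 = 0)
    (hT1 : ∀ d, T 1 d = if d = 2 then Hone u + Vc 2 else Vc d)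
    (hTstep : ∀ N, 2 ≤ N → ∀ d, T N d = expAdComp (G N) N (T (N - 1)) d) :
    ∀ N, 1 ≤ N → T N 0 = 0 := by
  intro N hN
  induction N, hN using Nat.le_induction with
  | base => rw [hT1]; simp [hV0]
  | succ N hN ih =>
    rw [hTstep (N+1) (by omega), expAdComp_zero, Nat.add_sub_cancel, ih]

lemma T_two_eq (hV0 : Vc 0 = 0) (hV2 : Vc 2 = 0)
    (hT1 : ∀ d, T 1 d = if d = 2 then Hone u + Vc 2 else Vc d)
    (hTstep : ∀ N, 2 ≤ N → ∀ d, T N d = expAdComp (G N) N (T (N - 1)) d) :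
    ∀ N, 1 ≤ N → T N 2 = Hone u := by
  intro N hN
  induction N, hN using Nat.le_induction with
  | base => rw [hT1]; simp [hV2]
  | succ N hN ih =>
    rw [hTstep (N+1) (by omega), Nat.add_sub_cancel,
      expAdComp_two _ _ (by omega) _ (T_zero_eq hV0 hT1 hTstep N hN), ih]

lemma T_top_eq (hV0 : Vc 0 = 0) (hV2 : Vc 2 = 0)
    (hT1 : ∀ d, T 1 d = if d = 2 then Hone u + Vc 2 else Vc d)
    (hTstep : ∀ N, 2 ≤ N → ∀ d, T N d = expAdComp (G N) N (T (N - 1)) d)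
    (N : ℕ) (hN : 2 ≤ N) :
    T N (2*N) = T (N-1) (2*N) + poisson (G N) (Hone u) := by
  rw [hTstep N hN (2*N),
    expAdComp_top _ _ hN _ (T_zero_eq hV0 hT1 hTstep (N-1) (by omega)),
    T_two_eq hV0 hV2 hT1 hTstep (N-1) (by omega)]

end Scheme

section TwoSystems

variable {u : Fin n → ℝ} {Vc Vc' : ℕ → MvPolynomial (Fin n ⊕ Fin n) ℝ}
  {G G' : ℕ → MvPolynomial (Fin n ⊕ Fin n) ℝ}
  {T T' : ℕ → ℕ → MvPolynomial (Fin n ⊕ Fin n) ℝ}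

lemma Tsub_eq
    (hT1 : ∀ d, T 1 d = if d = 2 then Hone u + Vc 2 else Vc d)
    (hT1' : ∀ d, T' 1 d = if d = 2 then Hone u + Vc' 2 else Vc' d)
    (hTstep : ∀ N, 2 ≤ N → ∀ d, T N d = expAdComp (G N) N (T (N - 1)) d)
    (hTstep' : ∀ N, 2 ≤ N → ∀ d, T' N d = expAdComp (G' N) N (T' (N - 1)) d)
    (D : ℕ) (hVlt : ∀ d, d < D → Vc d = Vc' d) :
    ∀ N, 1 ≤ N → (∀ i, 2 ≤ i → i ≤ N → G i = G' i) →
      ∀ d, d ≤ D → T N d - Vc d = T' N d - Vc' d := by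
  intro N hN
  induction N, hN using Nat.le_induction with
  | base =>
    intro _ d _
    rw [hT1, hT1']
    by_cases hd : d = 2
    · subst hd
      rw [if_pos rfl, if_pos rfl]
      ring
    · rw [if_neg hd, if_neg hd, sub_self, sub_self]
  | succ N hN ih =>
    intro hGeq d hd
    have ihG : ∀ i, 2 ≤ i → i ≤ N → G i = G' i := fun i h2 hi => hGeq i h2 (by omega)
    have hTeq : ∀ d', d' < D → T N d' = T' N d' := by
      intro d' hd'
      have h1 := ih ihG d' (le_of_lt hd')
      have h2 := hVlt d' hd'
      have : T N d' - Vc d' + Vc d' = T' N d' - Vc' d' + Vc' d' := by rw [h1, h2]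
      simpa using this
    rw [hTstep (N+1) (by omega) d, hTstep' (N+1) (by omega) d, Nat.add_sub_cancel,
      expAdComp_split, expAdComp_split]
    have hsum : ∀ i ∈ Finset.range d,
        (if (i+1) * (2 * (N+1) - 2) ≤ d then
          (((i+1).factorial : ℝ)⁻¹) • adIter (G (N+1)) (i+1) (T N (d - (i+1) * (2 * (N+1) - 2)))
        else 0)
        = (if (i+1) * (2 * (N+1) - 2) ≤ d then
          (((i+1).factorial : ℝ)⁻¹) • adIter (G' (N+1)) (i+1) (T' N (d - (i+1) * (2 * (N+1) - 2)))
        else 0) := by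
      intro i _
      by_cases hc : (i+1) * (2 * (N+1) - 2) ≤ d
      · rw [if_pos hc, if_pos hc, hGeq (N+1) (by omega) (le_refl _),
          hTeq (d - (i+1) * (2 * (N+1) - 2)) (by
            have : 2 ≤ (i+1) * (2 * (N+1) - 2) := by
              have h1 : 1 * 2 ≤ (i+1) * (2 * (N+1) - 2) :=
                Nat.mul_le_mul (by omega) (by omega)
              omega
            omega)]
      · rw [if_neg hc, if_neg hc]
    rw [Finset.sum_congr rfl hsum, add_sub_right_comm, add_sub_right_comm, ih ihG d hd]

lemma keystep (hind : LinIndepQ u)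
    (hV0 : Vc 0 = 0) (hV2 : Vc 2 = 0) (hV0' : Vc' 0 = 0) (hV2' : Vc' 2 = 0)
    (hT1 : ∀ d, T 1 d = if d = 2 then Hone u + Vc 2 else Vc d)
    (hT1' : ∀ d, T' 1 d = if d = 2 then Hone u + Vc' 2 else Vc' d)
    (hTstep : ∀ N, 2 ≤ N → ∀ d, T N d = expAdComp (G N) N (T (N - 1)) d)
    (hTstep' : ∀ N, 2 ≤ N → ∀ d, T' N d = expAdComp (G' N) N (T' (N - 1)) d)
    (N : ℕ) (hN : 2 ≤ N)
    (hGdiag : ∀ d ∈ (toComplexZ (G N)).support, ¬ IsDiagExp d)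
    (hGdiag' : ∀ d ∈ (toComplexZ (G' N)).support, ¬ IsDiagExp d)
    (hKeq : T N (2*N) = T' N (2*N))
    (hxN : ∀ e ∈ (Vc (2*N)).support, ∀ j, e (Sum.inr j) = 0)
    (hxN' : ∀ e ∈ (Vc' (2*N)).support, ∀ j, e (Sum.inr j) = 0)
    (hevenN : ∀ e ∈ (Vc (2*N)).support, ∀ j, Even (e (Sum.inl j)))
    (hevenN' : ∀ e ∈ (Vc' (2*N)).support, ∀ j, Even (e (Sum.inl j)))
    (hGlt : ∀ i, 2 ≤ i → i < N → G i = G' i)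
    (hVlt : ∀ d, d < 2*N → Vc d = Vc' d) :
    Vc (2*N) = Vc' (2*N) ∧ G N = G' N := by
  have ht := T_top_eq hV0 hV2 hT1 hTstep N hN
  have ht' := T_top_eq hV0' hV2' hT1' hTstep' N hN
  have hts := Tsub_eq hT1 hT1' hTstep hTstep' (2*N) hVlt (N-1) (by omega)
    (fun i h2 hi => hGlt i h2 (by omega)) (2*N) (le_refl _)
  have hKK := hKeq
  rw [ht, ht'] at hKK
  have key : Vc (2*N) - Vc' (2*N) = poisson (G' N - G N) (Hone u) := by
    rw [poisson_sub_left]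
    linear_combination hKK - hts
  have hco : ∀ e, coeff e (toComplexZ (Vc (2*N) - Vc' (2*N)))
      = lam u e * coeff e (toComplexZ (G' N - G N)) := by
    intro e
    rw [key, coeff_phi_poisson_hone]
  have hW0 : Vc (2*N) - Vc' (2*N) = 0 := by
    apply diag_coeff_injective
    · intro e he j
      rcases Finset.mem_union.mp (support_sub _ _ _ he) with h | h
      · exact hxN e h j
      · exact hxN' e h j
    · intro e he j
      rcases Finset.mem_union.mp (support_sub _ _ _ he) with h | h
      · exact hevenN e h j
      · exact hevenN' e h j
    · intro e hdg
      rw [hco e, lam_diag_eq_zero u e hdg, zero_mul]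
  refine ⟨sub_eq_zero.mp hW0, ?_⟩
  have hQ0 : toComplexZ (G' N - G N) = 0 := by
    apply MvPolynomial.ext
    intro e
    rw [coeff_zero]
    by_cases hdg : IsDiagExp e
    · rw [map_sub, coeff_sub]
      have c1 : coeff e (toComplexZ (G' N)) = 0 := by
        by_contra hc
        exact hGdiag' e (mem_support_iff.mpr hc) hdg
      have c2 : coeff e (toComplexZ (G N)) = 0 := by
        by_contra hc
        exact hGdiag e (mem_support_iff.mpr hc) hdg
      rw [c1, c2, sub_zero]
    · have h5 := hco e
      rw [hW0, map_zero, coeff_zero] at h5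
      rcases mul_eq_zero.mp h5.symm with h6 | h6
      · exact absurd h6 (lam_ne_zero u hind e hdg)
      · exact h6
  rw [map_sub, sub_eq_zero] at hQ0
  exact (toComplexZ_injective hQ0).symm

end TwoSystems

end Aux

theorem stmt16 {n : ℕ} (u : Fin n → ℝ) (hpos : ∀ j, 0 < u j) (hind : LinIndepQ u)
    (Vc Vc' : ℕ → MvPolynomial (Fin n ⊕ Fin n) ℝ)
    -- the potentials are formal power series in `x` alone, starting at degree 4,
    -- with all exponents even (equivalently, invariant under all sign flips):
    (hhom : ∀ d, (Vc d).IsHomogeneous d) (hhom' : ∀ d, (Vc' d).IsHomogeneous d)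
    (hlow : ∀ d, d < 4 → Vc d = 0) (hlow' : ∀ d, d < 4 → Vc' d = 0)
    (hx : ∀ d, ∀ e ∈ (Vc d).support, ∀ j, e (Sum.inr j) = 0)
    (hx' : ∀ d, ∀ e ∈ (Vc' d).support, ∀ j, e (Sum.inr j) = 0)
    (heven : ∀ d, ∀ e ∈ (Vc d).support, ∀ j, Even (e (Sum.inl j)))
    (heven' : ∀ d, ∀ e ∈ (Vc' d).support, ∀ j, Even (e (Sum.inl j)))
    (K : ℕ → MvPolynomial (Fin n ⊕ Fin n) ℝ)
    (hB : BirkhoffNormalizes u Vc K) (hB' : BirkhoffNormalizes u Vc' K) :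
    ∀ d, Vc d = Vc' d := by
  obtain ⟨G, T, hT1, hstep, -⟩ := hB
  obtain ⟨G', T', hT1', hstep', -⟩ := hB'
  have hTstep : ∀ N, 2 ≤ N → ∀ d, T N d = expAdComp (G N) N (T (N-1)) d :=
    fun N hN => (hstep N hN).2.2.1
  have hTstep' : ∀ N, 2 ≤ N → ∀ d, T' N d = expAdComp (G' N) N (T' (N-1)) d :=
    fun N hN => (hstep' N hN).2.2.1
  have hGdiag : ∀ N, 2 ≤ N → ∀ d ∈ (toComplexZ (G N)).support, ¬ IsDiagExp d :=
    fun N hN => (hstep N hN).2.1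
  have hGdiag' : ∀ N, 2 ≤ N → ∀ d ∈ (toComplexZ (G' N)).support, ¬ IsDiagExp d :=
    fun N hN => (hstep' N hN).2.1
  have hTT : ∀ N, 2 ≤ N → T N (2*N) = T' N (2*N) := fun N hN => by
    rw [(hstep N hN).2.2.2 N hN (le_refl N), (hstep' N hN).2.2.2 N hN (le_refl N)]
  have hodd : ∀ (Vx : ℕ → MvPolynomial (Fin n ⊕ Fin n) ℝ),
      (∀ d, (Vx d).IsHomogeneous d) →
      (∀ d, ∀ e ∈ (Vx d).support, ∀ j, e (Sum.inr j) = 0) →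
      (∀ d, ∀ e ∈ (Vx d).support, ∀ j, Even (e (Sum.inl j))) →
      ∀ d, Odd d → Vx d = 0 := by
    intro Vx h1 h2 h3 d hd
    by_contra hne
    obtain ⟨e, he⟩ := Finset.nonempty_of_ne_empty (fun h => hne (support_eq_empty.mp h))
    have hw := h1 d (mem_support_iff.mp he)
    have hdeg : Finsupp.degree e = d := by
      rw [Finsupp.degree_eq_weight_one]
      exact hw
    have heven_sum : Even (Finsupp.degree e) := by
      unfold Finsupp.degree
      apply Finset.even_sum
      intro v hv
      rcases v with j | j
      · exact h3 d e he j
      · rw [h2 d e he j]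
        exact Even.zero
    rw [hdeg] at heven_sum
    exact (Nat.not_odd_iff_even.mpr heven_sum) hd
  have hoddV := hodd Vc hhom hx heven
  have hoddV' := hodd Vc' hhom' hx' heven'
  have claim : ∀ N, 2 ≤ N →
      (∀ d, d ≤ 2*N → Vc d = Vc' d) ∧ (∀ i, 2 ≤ i → i ≤ N → G i = G' i) := by
    intro N hN
    induction N, hN using Nat.le_induction with
    | base =>
      have hks := keystep hind (hlow 0 (by omega)) (hlow 2 (by omega))
        (hlow' 0 (by omega)) (hlow' 2 (by omega)) hT1 hT1' hTstep hTstep'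
        2 (le_refl 2) (hGdiag 2 (le_refl 2)) (hGdiag' 2 (le_refl 2)) (hTT 2 (le_refl 2))
        (hx (2*2)) (hx' (2*2)) (heven (2*2)) (heven' (2*2))
        (fun i h2 hi => absurd (lt_of_lt_of_le hi h2) (lt_irrefl _))
        (fun d hd => by rw [hlow d (by omega), hlow' d (by omega)])
      constructor
      · intro d hd
        by_cases h4 : d < 4
        · rw [hlow d h4, hlow' d h4]
        · have hd4 : d = 2*2 := by omega
          subst hd4
          exact hks.1
      · intro i h2 hi
        have : i = 2 := by omega
        subst this
        exact hks.2
    | succ N hN ih =>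
      have hVlt : ∀ d, d < 2*(N+1) → Vc d = Vc' d := by
        intro d hd
        by_cases hdl : d ≤ 2*N
        · exact ih.1 d hdl
        · have hodd_d : Odd d := by
            have hde : d = 2*N+1 := by omega
            exact ⟨N, by omega⟩
          rw [hoddV d hodd_d, hoddV' d hodd_d]
      have hks := keystep hind (hlow 0 (by omega)) (hlow 2 (by omega))
        (hlow' 0 (by omega)) (hlow' 2 (by omega)) hT1 hT1' hTstep hTstep'
        (N+1) (by omega) (hGdiag (N+1) (by omega)) (hGdiag' (N+1) (by omega))
        (hTT (N+1) (by omega))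
        (hx (2*(N+1))) (hx' (2*(N+1))) (heven (2*(N+1))) (heven' (2*(N+1)))
        (fun i h2 hi => ih.2 i h2 (by omega)) hVlt
      constructor
      · intro d hd
        by_cases hde : d = 2*(N+1)
        · subst hde
          exact hks.1
        · exact hVlt d (by omega)
      · intro i h2 hi
        by_cases hiN : i ≤ N
        · exact ih.2 i h2 hiN
        · have : i = N+1 := by omega
          subst this
          exact hks.2
  intro d
  by_cases h4 : d < 4
  · rw [hlow d h4, hlow' d h4]
  · rcases Nat.even_or_odd d with hev | ho
    · obtain ⟨m, hm⟩ := hev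
      have hm2 : 2 ≤ m := by omega
      exact (claim m hm2).1 d (by omega)
    · rw [hoddV d ho, hoddV' d ho]
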